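/- arXiv:2307.06188 — 3 statements merged into one kernel-verified Lean document; each statement's English description precedes it below -/
import Mathlib

section
/- Let p ∈ (d, ∞], h > 0, and let f be continuous on the closure of hK∩C, differentiable on hK∩C, with |∇f|_{K°} ∈ L_p(hK∩C). Then |f(θ) − S_h f(θ)| ≤ ‖g_h(|·|_K)‖_{L_{p'}(hK∩C)} · ‖|∇f|_{K°}‖_{L_p(hK∩C)}, where f(θ) and S_h f(θ) are understood via the continuous extension of f to the closure. -/
open MeasureTheory Real Set
open scoped ENNReal Pointwise

noncomputable section
open scoped Classical

/-- The conjugate exponent `p' = p/(p-1)` in `ℝ≥0∞`, defined via `1/p' = 1 - 1/p`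
(so that `p = ∞` gives `p' = 1`). -/
def conjExp (p : ℝ≥0∞) : ℝ≥0∞ := (1 - p⁻¹)⁻¹

/-- The Euler Beta function. -/
def eulerBeta (a b : ℝ) : ℝ := Real.Gamma a * Real.Gamma b / Real.Gamma (a + b)

/-- The constant `A(d,p) = d⁻¹ B(1-(d-1)p'/d, p'+1)^{1/p'}`. -/
def Aconst (d : ℕ) (p : ℝ≥0∞) : ℝ :=
  (d : ℝ)⁻¹ *
    eulerBeta (1 - ((d : ℝ) - 1) * (conjExp p).toReal / d) ((conjExp p).toReal + 1) ^
      (1 / (conjExp p).toReal)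

/-- The exponent `α = pd/(p+(p-1)d) = dp'/(p'+d)` (the latter form makes sense also
for `p = ∞`). -/
def alphaConst (d : ℕ) (p : ℝ≥0∞) : ℝ :=
  (d : ℝ) * (conjExp p).toReal / ((conjExp p).toReal + d)

/-- The constant `a(d,p) = ((p-d)A(d,p)/(pd))^α (pd/(p-d)+1)`, written using
`(p-d)/(pd) = 1/d - 1/p` so that `p = ∞` is allowed. -/
def aConst (d : ℕ) (p : ℝ≥0∞) : ℝ :=
  (((d : ℝ)⁻¹ - p.toReal⁻¹) * Aconst d p) ^ alphaConst d p *
    (((d : ℝ)⁻¹ - p.toReal⁻¹)⁻¹ + 1)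

variable {d : ℕ}

/-- The dual norm `|z|_{K°} = sup {⟨x,z⟩ : |x|_K ≤ 1}`, where `|·|_K` is the gauge of `K`. -/
def dualNorm (K : Set (EuclideanSpace ℝ (Fin d))) (z : EuclideanSpace ℝ (Fin d)) : ℝ :=
  sSup ((fun x => (inner ℝ x z : ℝ)) '' {x | gauge K x ≤ 1})

/-- The function `g_h(u) = (d μ(K∩C))⁻¹ (u^{1-d} - u/h^d)`. -/
def gfun (K C : Set (EuclideanSpace ℝ (Fin d))) (h u : ℝ) : ℝ :=
  ((d : ℝ) * (volume (K ∩ C)).toReal)⁻¹ * (u ^ (1 - (d : ℝ)) - u / h ^ d)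

/-- The Steklov type operator `S_h f(x) = (h^d μ(K∩C))⁻¹ ∫_{hK∩C} f(x+y) dy`. -/
def steklov (K C : Set (EuclideanSpace ℝ (Fin d))) (h : ℝ) (f : EuclideanSpace ℝ (Fin d) → ℝ)
    (x : EuclideanSpace ℝ (Fin d)) : ℝ :=
  (h ^ d * (volume (K ∩ C)).toReal)⁻¹ * ∫ y in (h • K) ∩ C, f (x + y)

/-- The set of values `|∫_{hK∩C} f(x+u) du|`, `x ∈ C`, whose supremum is `⌋f⌈_h`. -/
def semiSet (K C : Set (EuclideanSpace ℝ (Fin d))) (h : ℝ) (f : EuclideanSpace ℝ (Fin d) → ℝ) :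
    Set ℝ :=
  (fun x => |∫ u in (h • K) ∩ C, f (x + u)|) '' C

/-- The seminorm `⌋f⌈_h = sup_{x ∈ C} |∫_{hK∩C} f(x+u) du|`. -/
def semiNorm (K C : Set (EuclideanSpace ℝ (Fin d))) (h : ℝ) (f : EuclideanSpace ℝ (Fin d) → ℝ) :
    ℝ :=
  sSup (semiSet K C h f)

/-- The seminorm `⌋f⌈ = sup_{t>0} ⌋f⌈_t`. -/
def semiNormAll (K C : Set (EuclideanSpace ℝ (Fin d))) (f : EuclideanSpace ℝ (Fin d) → ℝ) : ℝ :=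
  sSup (⋃ t ∈ Set.Ioi (0 : ℝ), semiSet K C t f)

/-- The extremal function `f_{e,h}`. -/
def fe (K C : Set (EuclideanSpace ℝ (Fin d))) (p : ℝ≥0∞) (h : ℝ)
    (y : EuclideanSpace ℝ (Fin d)) : ℝ :=
  if y ∈ h • K then ∫ u in gauge K y..h, gfun K C h u ^ ((conjExp p).toReal - 1) else 0


section AuxOstrowski

variable {d : ℕ}

lemma aux_smul_cone_eq {C : Set (EuclideanSpace ℝ (Fin d))}
    (hC : ∀ x ∈ C, ∀ t : ℝ, 0 < t → t • x ∈ C) {t : ℝ} (ht : 0 < t) : t • C = C := by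
  apply Set.Subset.antisymm
  · rintro _ ⟨x, hx, rfl⟩
    exact hC x hx t ht
  · intro x hx
    exact ⟨t⁻¹ • x, hC x hx t⁻¹ (by positivity), smul_inv_smul₀ ht.ne' x⟩

lemma aux_mem_smul_iff {K : Set (EuclideanSpace ℝ (Fin d))} (hK_conv : Convex ℝ K)
    (hK_open : IsOpen K) (hK_zero : (0 : EuclideanSpace ℝ (Fin d)) ∈ K)
    {t : ℝ} (ht : 0 < t) {x : EuclideanSpace ℝ (Fin d)} :
    x ∈ t • K ↔ gauge K x < t := by
  have hset := gauge_lt_one_eq_self_of_isOpen hK_conv hK_zero hK_open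
  rw [mem_smul_set_iff_inv_smul_mem₀ ht.ne']
  constructor
  · intro hx
    have h2 : t⁻¹ • x ∈ {x : EuclideanSpace ℝ (Fin d) | gauge K x < 1} := by
      rw [hset]; exact hx
    rw [mem_setOf_eq, gauge_smul_of_nonneg (inv_nonneg.2 ht.le), smul_eq_mul] at h2
    rwa [inv_mul_lt_iff₀ ht, mul_one] at h2
  · intro hx
    have h2 : t⁻¹ • x ∈ {x : EuclideanSpace ℝ (Fin d) | gauge K x < 1} := by
      rw [mem_setOf_eq, gauge_smul_of_nonneg (inv_nonneg.2 ht.le), smul_eq_mul,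
        inv_mul_lt_iff₀ ht, mul_one]
      exact hx
    rw [hset] at h2; exact h2

lemma aux_bound_exists {K : Set (EuclideanSpace ℝ (Fin d))} (hK_conv : Convex ℝ K)
    (hK_open : IsOpen K) (hK_zero : (0 : EuclideanSpace ℝ (Fin d)) ∈ K)
    (hK_bdd : Bornology.IsBounded K) :
    ∃ R : ℝ, 0 ≤ R ∧ ∀ x : EuclideanSpace ℝ (Fin d), gauge K x ≤ 1 → ‖x‖ ≤ R := by
  obtain ⟨R, hR⟩ := hK_bdd.closure.exists_norm_le
  refine ⟨R, le_trans (norm_nonneg (0 : EuclideanSpace ℝ (Fin d)))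
    (hR 0 (subset_closure hK_zero)), fun x hx => hR x ?_⟩
  exact (gauge_le_one_iff_mem_closure hK_conv (hK_open.mem_nhds hK_zero)).1 hx

lemma aux_dualNorm_bddAbove {K : Set (EuclideanSpace ℝ (Fin d))} (hK_conv : Convex ℝ K)
    (hK_open : IsOpen K) (hK_zero : (0 : EuclideanSpace ℝ (Fin d)) ∈ K)
    (hK_bdd : Bornology.IsBounded K) (z : EuclideanSpace ℝ (Fin d)) :
    BddAbove ((fun x => (inner ℝ x z : ℝ)) '' {x | gauge K x ≤ 1}) := by
  obtain ⟨R, hR0, hR⟩ := aux_bound_exists hK_conv hK_open hK_zero hK_bdd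
  refine ⟨R * ‖z‖, ?_⟩
  rintro _ ⟨x, hx, rfl⟩
  calc (inner ℝ x z : ℝ) ≤ ‖x‖ * ‖z‖ := real_inner_le_norm x z
    _ ≤ R * ‖z‖ := mul_le_mul_of_nonneg_right (hR x hx) (norm_nonneg z)

lemma aux_dualNorm_nonneg {K : Set (EuclideanSpace ℝ (Fin d))} (hK_conv : Convex ℝ K)
    (hK_open : IsOpen K) (hK_zero : (0 : EuclideanSpace ℝ (Fin d)) ∈ K)
    (hK_bdd : Bornology.IsBounded K) (z : EuclideanSpace ℝ (Fin d)) :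
    0 ≤ dualNorm K z := by
  have h0 : (0:ℝ) ∈ (fun x => (inner ℝ x z : ℝ)) '' {x | gauge K x ≤ 1} :=
    ⟨0, by simp [gauge_zero], by simp⟩
  exact le_csSup (aux_dualNorm_bddAbove hK_conv hK_open hK_zero hK_bdd z) h0

lemma aux_abs_inner_le_dualNorm {K : Set (EuclideanSpace ℝ (Fin d))} (hK_conv : Convex ℝ K)
    (hK_open : IsOpen K) (hK_zero : (0 : EuclideanSpace ℝ (Fin d)) ∈ K)
    (hK_bdd : Bornology.IsBounded K) (hK_symm : ∀ x ∈ K, -x ∈ K)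
    (z y : EuclideanSpace ℝ (Fin d)) :
    |(inner ℝ y z : ℝ)| ≤ dualNorm K z * gauge K y := by
  rcases eq_or_ne y 0 with rfl | hy
  · simp [gauge_zero]
  · have habs : Absorbent ℝ K := absorbent_nhds_zero (hK_open.mem_nhds hK_zero)
    have hvb : Bornology.IsVonNBounded ℝ K := (NormedSpace.isVonNBounded_iff ℝ).2 hK_bdd
    have hu : 0 < gauge K y := (gauge_pos habs hvb).2 hy
    have hmem : ∀ x : EuclideanSpace ℝ (Fin d), gauge K x ≤ 1 →
        (inner ℝ x z : ℝ) ≤ dualNorm K z := fun x hx =>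
      le_csSup (aux_dualNorm_bddAbove hK_conv hK_open hK_zero hK_bdd z) ⟨x, hx, rfl⟩
    have h1 : gauge K ((gauge K y)⁻¹ • y) ≤ 1 := by
      rw [gauge_smul_of_nonneg (inv_nonneg.2 hu.le), smul_eq_mul, inv_mul_cancel₀ hu.ne']
    have h2 : gauge K (-((gauge K y)⁻¹ • y)) ≤ 1 := by rw [gauge_neg hK_symm]; exact h1
    have e1 := hmem _ h1
    have e2 := hmem _ h2
    rw [real_inner_smul_left] at e1
    rw [inner_neg_left, real_inner_smul_left] at e2
    have hD : 0 ≤ dualNorm K z := aux_dualNorm_nonneg hK_conv hK_open hK_zero hK_bdd z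
    rw [abs_le]
    have e1' : (inner ℝ y z : ℝ) ≤ gauge K y * dualNorm K z := by
      have h3 := mul_le_mul_of_nonneg_left e1 hu.le
      rwa [← mul_assoc, mul_inv_cancel₀ hu.ne', one_mul] at h3
    have e2' : -(inner ℝ y z : ℝ) ≤ gauge K y * dualNorm K z := by
      have h3 := mul_le_mul_of_nonneg_left e2 hu.le
      rwa [mul_neg, ← mul_assoc, mul_inv_cancel₀ hu.ne', one_mul] at h3
    constructor
    · linarith [e2', mul_comm (gauge K y) (dualNorm K z)]
    · linarith [e1', mul_comm (gauge K y) (dualNorm K z)]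

lemma aux_dualNorm_continuous {K : Set (EuclideanSpace ℝ (Fin d))} (hK_conv : Convex ℝ K)
    (hK_open : IsOpen K) (hK_zero : (0 : EuclideanSpace ℝ (Fin d)) ∈ K)
    (hK_bdd : Bornology.IsBounded K) :
    Continuous (dualNorm K) := by
  obtain ⟨R, hR0, hR⟩ := aux_bound_exists hK_conv hK_open hK_zero hK_bdd
  have key : ∀ z w : EuclideanSpace ℝ (Fin d), dualNorm K z ≤ dualNorm K w + R * ‖z - w‖ := by
    intro z w
    apply Real.sSup_le
    · rintro _ ⟨x, hx, rfl⟩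
      show (inner ℝ x z : ℝ) ≤ dualNorm K w + R * ‖z - w‖
      have hxz : (inner ℝ x z : ℝ) = inner ℝ x w + inner ℝ x (z - w) := by
        rw [← inner_add_right]
        congr 1
        abel
      rw [hxz]
      have hb1 : (inner ℝ x w : ℝ) ≤ dualNorm K w :=
        le_csSup (aux_dualNorm_bddAbove hK_conv hK_open hK_zero hK_bdd w) ⟨x, hx, rfl⟩
      have hb2 : (inner ℝ x (z - w) : ℝ) ≤ ‖x‖ * ‖z - w‖ := real_inner_le_norm _ _
      have hb3 : ‖x‖ * ‖z - w‖ ≤ R * ‖z - w‖ :=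
        mul_le_mul_of_nonneg_right (hR x hx) (norm_nonneg _)
      linarith
    · exact add_nonneg (aux_dualNorm_nonneg hK_conv hK_open hK_zero hK_bdd w)
        (mul_nonneg hR0 (norm_nonneg _))
  have lip : LipschitzWith R.toNNReal (dualNorm K) := by
    apply LipschitzWith.of_dist_le_mul
    intro z w
    rw [Real.dist_eq, dist_eq_norm, Real.coe_toNNReal R hR0, abs_le]
    have h1 := key z w
    have h2 := key w z
    rw [norm_sub_rev w z] at h2
    constructor <;> linarith
  exact lip.continuous

lemma aux_F_meas {K : Set (EuclideanSpace ℝ (Fin d))} (hK_conv : Convex ℝ K)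
    (hK_open : IsOpen K) (hK_zero : (0 : EuclideanSpace ℝ (Fin d)) ∈ K)
    (hK_bdd : Bornology.IsBounded K) (f : EuclideanSpace ℝ (Fin d) → ℝ) :
    Measurable fun x : EuclideanSpace ℝ (Fin d) => dualNorm K (gradient f x) := by
  have h2 : Measurable (gradient f) := by
    show Measurable fun x => (InnerProductSpace.toDual ℝ (EuclideanSpace ℝ (Fin d))).symm
      (fderiv ℝ f x)
    exact (InnerProductSpace.toDual ℝ
      (EuclideanSpace ℝ (Fin d))).symm.continuous.measurable.comp (measurable_fderiv ℝ f)
  exact (aux_dualNorm_continuous hK_conv hK_open hK_zero hK_bdd).measurable.comp h2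

lemma aux_lintegral_comp_smul (G : EuclideanSpace ℝ (Fin d) → ℝ≥0∞) {t : ℝ} (ht : 0 < t)
    {s : Set (EuclideanSpace ℝ (Fin d))} (hts : MeasurableSet (t • s)) :
    ∫⁻ y in s, G (t • y) = ENNReal.ofReal ((t ^ d)⁻¹) * ∫⁻ x in t • s, G x := by
  have hemb : MeasurableEmbedding (fun y : EuclideanSpace ℝ (Fin d) => t • y) :=
    (Homeomorph.smulOfNeZero t ht.ne').measurableEmbedding
  have hss : (fun y : EuclideanSpace ℝ (Fin d) => t • y) ⁻¹' (t • s) = s := by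
    ext x
    rw [Set.mem_preimage, smul_mem_smul_set_iff₀ ht.ne']
  have h1 : (Measure.map (fun y : EuclideanSpace ℝ (Fin d) => t • y) volume).restrict (t • s)
      = Measure.map (fun y : EuclideanSpace ℝ (Fin d) => t • y) (volume.restrict s) := by
    rw [Measure.restrict_map hemb.measurable hts, hss]
  calc ∫⁻ y in s, G (t • y)
      = ∫⁻ x, G x ∂(Measure.map (fun y : EuclideanSpace ℝ (Fin d) => t • y)
          (volume.restrict s)) := (hemb.lintegral_map G).symm
    _ = ∫⁻ x, G x ∂((Measure.map (fun y : EuclideanSpace ℝ (Fin d) => t • y)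
          volume).restrict (t • s)) := by rw [h1]
    _ = ENNReal.ofReal ((t ^ d)⁻¹) * ∫⁻ x in t • s, G x := by
        rw [Measure.map_addHaar_smul volume ht.ne']
        rw [Measure.restrict_smul, lintegral_smul_measure]
        congr 2
        rw [finrank_euclideanSpace_fin, abs_of_nonneg (by positivity)]

lemma aux_ftc_bound {K : Set (EuclideanSpace ℝ (Fin d))} (hK_conv : Convex ℝ K)
    (hK_open : IsOpen K) (hK_zero : (0 : EuclideanSpace ℝ (Fin d)) ∈ K)
    (hK_bdd : Bornology.IsBounded K) (hK_symm : ∀ x ∈ K, -x ∈ K)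
    {E : Set (EuclideanSpace ℝ (Fin d))}
    (hsmul : ∀ t : ℝ, t ∈ Set.Ioc (0:ℝ) 1 → ∀ y ∈ E, t • y ∈ E)
    (h0cl : (0 : EuclideanSpace ℝ (Fin d)) ∈ closure E)
    {f : EuclideanSpace ℝ (Fin d) → ℝ} (hf_cont : ContinuousOn f (closure E))
    (hf_diff : ∀ x ∈ E, DifferentiableAt ℝ f x)
    {y : EuclideanSpace ℝ (Fin d)} (hy : y ∈ E) :
    ENNReal.ofReal |f 0 - f y| ≤
      ∫⁻ t in Set.Ioo (0:ℝ) 1, ENNReal.ofReal (dualNorm K (gradient f (t • y)) * gauge K y) := by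
  rcases eq_or_ne y 0 with rfl | hy0
  · simp
  by_cases hfin : (∫⁻ t in Set.Ioo (0:ℝ) 1,
      ENNReal.ofReal (dualNorm K (gradient f (t • y)) * gauge K y)) = ∞
  · rw [hfin]; exact le_top
  set B : ℝ → ℝ := fun t => dualNorm K (gradient f (t • y)) * gauge K y with hB_def
  have hB_nonneg : ∀ t, 0 ≤ B t := fun t =>
    mul_nonneg (aux_dualNorm_nonneg hK_conv hK_open hK_zero hK_bdd _) (gauge_nonneg _)
  have hB_meas : Measurable B :=
    ((aux_F_meas hK_conv hK_open hK_zero hK_bdd f).comp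
      ((continuous_id.smul (continuous_const :
        Continuous fun _ : ℝ => y)).measurable)).mul_const _
  have hB_int : IntegrableOn B (Set.Ioo (0:ℝ) 1) := by
    refine ⟨hB_meas.aestronglyMeasurable, ?_⟩
    rw [hasFiniteIntegral_iff_ofReal (Filter.Eventually.of_forall hB_nonneg)]
    exact lt_top_iff_ne_top.2 hfin
  have hmem : ∀ t : ℝ, t ∈ Set.Ioc (0:ℝ) 1 → t • y ∈ E := fun t ht => hsmul t ht y hy
  have hDbound : ∀ t ∈ Set.Ioc (0:ℝ) 1, |(fderiv ℝ f (t • y)) y| ≤ B t := by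
    intro t ht
    have e1 : (inner ℝ (gradient f (t • y)) y : ℝ) = (fderiv ℝ f (t • y)) y :=
      InnerProductSpace.toDual_symm_apply
    calc |(fderiv ℝ f (t • y)) y| = |(inner ℝ y (gradient f (t • y)) : ℝ)| := by
          rw [← e1, real_inner_comm]
      _ ≤ dualNorm K (gradient f (t • y)) * gauge K y :=
          aux_abs_inner_le_dualNorm hK_conv hK_open hK_zero hK_bdd hK_symm _ _
      _ = B t := rfl
  have hDmeas : Measurable fun t : ℝ => (fderiv ℝ f (t • y)) y :=
    (measurable_fderiv_apply_const ℝ f y).comp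
      ((continuous_id.smul (continuous_const : Continuous fun _ : ℝ => y)).measurable)
  have key : ∀ ε : ℝ, ε ∈ Set.Ioo (0:ℝ) 1 →
      ENNReal.ofReal |f y - f (ε • y)| ≤
        ∫⁻ t in Set.Ioo (0:ℝ) 1, ENNReal.ofReal (B t) := by
    intro ε hε
    have hε1 : ε ≤ 1 := hε.2.le
    have hIoc : Set.Icc ε 1 ⊆ Set.Ioc (0:ℝ) 1 := fun t htt => ⟨lt_of_lt_of_le hε.1 htt.1, htt.2⟩
    have hIoo : Set.Ioo ε 1 ⊆ Set.Ioo (0:ℝ) 1 := fun t htt => ⟨lt_trans hε.1 htt.1, htt.2⟩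
    have hderiv : ∀ t ∈ Set.Icc ε 1,
        HasDerivAt (fun s : ℝ => f (s • y)) ((fderiv ℝ f (t • y)) y) t := by
      intro t htt
      have h1 : HasDerivAt (fun s : ℝ => s • y) y t := by
        simpa using (hasDerivAt_id t).smul_const y
      exact ((hf_diff _ (hmem t (hIoc htt))).hasFDerivAt).comp_hasDerivAt t h1
    have hBint' : IntervalIntegrable B volume ε 1 := by
      rw [intervalIntegrable_iff, Set.uIoc_of_le hε1, integrableOn_Ioc_iff_integrableOn_Ioo]
      exact hB_int.mono_set hIoo
    have hDint : IntervalIntegrable (fun t => (fderiv ℝ f (t • y)) y) volume ε 1 := by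
      rw [intervalIntegrable_iff, Set.uIoc_of_le hε1, integrableOn_Ioc_iff_integrableOn_Ioo]
      refine Integrable.mono (hB_int.mono_set hIoo) hDmeas.aestronglyMeasurable ?_
      rw [ae_restrict_iff' measurableSet_Ioo]
      refine Filter.Eventually.of_forall fun t htt => ?_
      rw [Real.norm_eq_abs, Real.norm_eq_abs, abs_of_nonneg (hB_nonneg t)]
      exact hDbound t ⟨lt_trans hε.1 htt.1, htt.2.le⟩
    have hFTC := intervalIntegral.integral_eq_sub_of_hasDerivAt
      (fun t htt => hderiv t (by rwa [Set.uIcc_of_le hε1] at htt)) hDint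
    have habs : |f y - f (ε • y)| ≤ ∫ t in Set.Ioo (0:ℝ) 1, B t := by
      have h1 : f y - f (ε • y) = ∫ t in ε..1, (fderiv ℝ f (t • y)) y := by
        rw [hFTC, one_smul]
      rw [h1]
      calc |∫ t in ε..1, (fderiv ℝ f (t • y)) y|
          ≤ ∫ t in ε..1, |(fderiv ℝ f (t • y)) y| :=
            intervalIntegral.abs_integral_le_integral_abs hε1
        _ ≤ ∫ t in ε..1, B t :=
            intervalIntegral.integral_mono_on hε1 hDint.abs hBint'
              (fun t htt => hDbound t (hIoc htt))
        _ = ∫ t in Set.Ioc ε 1, B t := intervalIntegral.integral_of_le hε1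
        _ ≤ ∫ t in Set.Ioo (0:ℝ) 1, B t := by
            apply setIntegral_mono_set hB_int
              (ae_restrict_of_ae (Filter.Eventually.of_forall hB_nonneg))
            rw [ae_le_set]
            apply measure_mono_null (t := {(1:ℝ)}) ?_ (measure_singleton 1)
            intro t htt
            simp only [Set.mem_diff, Set.mem_Ioc, Set.mem_Ioo, not_and, not_lt] at htt
            exact le_antisymm htt.1.2 (htt.2 (lt_trans hε.1 htt.1.1))
    calc ENNReal.ofReal |f y - f (ε • y)|
        ≤ ENNReal.ofReal (∫ t in Set.Ioo (0:ℝ) 1, B t) := ENNReal.ofReal_le_ofReal habs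
      _ = ∫⁻ t in Set.Ioo (0:ℝ) 1, ENNReal.ofReal (B t) :=
          ofReal_integral_eq_lintegral_ofReal hB_int
            (ae_restrict_of_ae (Filter.Eventually.of_forall hB_nonneg))
  have hylim : Filter.Tendsto (fun ε : ℝ => f (ε • y))
      (nhdsWithin 0 (Set.Ioi 0)) (nhds (f 0)) := by
    have hcont0 : ContinuousWithinAt f (closure E) 0 := hf_cont 0 h0cl
    apply hcont0.tendsto.comp
    refine tendsto_nhdsWithin_of_tendsto_nhds_of_eventually_within _ ?_ ?_
    · have h1 : Filter.Tendsto (fun ε : ℝ => ε • y) (nhds 0) (nhds ((0:ℝ) • y)) :=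
        ((continuous_id.smul (continuous_const : Continuous fun _ : ℝ => y)).tendsto (0:ℝ))
      rw [zero_smul] at h1
      exact h1.mono_left nhdsWithin_le_nhds
    · filter_upwards [Ioo_mem_nhdsGT_of_mem (Set.mem_Ico.2 ⟨le_refl (0:ℝ), zero_lt_one⟩)]
        with ε hε
      exact subset_closure (hmem ε ⟨hε.1, hε.2.le⟩)
  have hc1 : Continuous fun v : ℝ => ENNReal.ofReal |f y - v| :=
    ENNReal.continuous_ofReal.comp ((continuous_const.sub continuous_id).abs)
  have hlim : Filter.Tendsto (fun ε : ℝ => ENNReal.ofReal |f y - f (ε • y)|)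
      (nhdsWithin 0 (Set.Ioi 0)) (nhds (ENNReal.ofReal |f y - f 0|)) :=
    (hc1.tendsto (f 0)).comp hylim
  have final : ENNReal.ofReal |f y - f 0| ≤
      ∫⁻ t in Set.Ioo (0:ℝ) 1, ENNReal.ofReal (B t) := by
    apply le_of_tendsto hlim
    filter_upwards [Ioo_mem_nhdsGT_of_mem (Set.mem_Ico.2 ⟨le_refl (0:ℝ), zero_lt_one⟩)]
      with ε hε using key ε hε
  rwa [abs_sub_comm] at final

end AuxOstrowski
set_option maxHeartbeats 1600000 in
/-- Ostrowski-type inequality: for `p ∈ (d,∞]`, `h > 0` and `f` continuous on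
the closure of `hK ∩ C`, differentiable on `hK ∩ C` with `|∇f|_{K°} ∈ L_p(hK∩C)`, one has
`|f(θ) - S_h f(θ)| ≤ ‖g_h(|·|_K)‖_{L_{p'}(hK∩C)} ‖|∇f|_{K°}‖_{L_p(hK∩C)}`. -/
theorem statement1 (d : ℕ) (hd : 1 ≤ d) (K C : Set (EuclideanSpace ℝ (Fin d)))
    (hC_open : IsOpen C) (hC_conv : Convex ℝ C)
    (hC_cone : ∀ x ∈ C, ∀ t : ℝ, 0 < t → t • x ∈ C) (hC_ne : C.Nonempty)
    (hK_open : IsOpen K) (hK_conv : Convex ℝ K) (hK_bdd : Bornology.IsBounded K)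
    (hK_symm : ∀ x ∈ K, -x ∈ K) (hK_zero : (0 : EuclideanSpace ℝ (Fin d)) ∈ K)
    (p : ℝ≥0∞) (hp : (d : ℝ≥0∞) < p) (h : ℝ) (hh : 0 < h)
    (f : EuclideanSpace ℝ (Fin d) → ℝ)
    (hf_cont : ContinuousOn f (closure ((h • K) ∩ C)))
    (hf_diff : ∀ x ∈ (h • K) ∩ C, DifferentiableAt ℝ f x)
    (hf_lp :
      eLpNorm (fun x => dualNorm K (gradient f x)) p (volume.restrict ((h • K) ∩ C)) ≠ ∞) :
    ENNReal.ofReal |f 0 - steklov K C h f 0| ≤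
      eLpNorm (fun y => gfun K C h (gauge K y)) (conjExp p) (volume.restrict ((h • K) ∩ C)) *
        eLpNorm (fun x => dualNorm K (gradient f x)) p (volume.restrict ((h • K) ∩ C)) := by
  classical
  have hd0 : (0:ℝ) < (d:ℝ) := by exact_mod_cast Nat.lt_of_lt_of_le Nat.zero_lt_one hd
  have hdr1 : (1:ℝ) ≤ (d:ℝ) := by exact_mod_cast hd
  set E : Set (EuclideanSpace ℝ (Fin d)) := (h • K) ∩ C with hE_def
  have habs : Absorbent ℝ K := absorbent_nhds_zero (hK_open.mem_nhds hK_zero)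
  have hvb : Bornology.IsVonNBounded ℝ K := (NormedSpace.isVonNBounded_iff ℝ).2 hK_bdd
  have hKC_smul : ∀ t : ℝ, 0 < t → t • C = C := fun t ht => aux_smul_cone_eq hC_cone ht
  have hE_mem : ∀ {x : EuclideanSpace ℝ (Fin d)}, x ∈ E ↔ gauge K x < h ∧ x ∈ C := by
    intro x
    rw [hE_def, Set.mem_inter_iff, aux_mem_smul_iff hK_conv hK_open hK_zero hh]
  have hsmulE : ∀ t : ℝ, t ∈ Set.Ioc (0:ℝ) 1 → ∀ y ∈ E, t • y ∈ E := by
    intro t ht y hy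
    rcases hE_mem.1 hy with ⟨hy1, hy2⟩
    refine hE_mem.2 ⟨?_, hC_cone y hy2 t ht.1⟩
    rw [gauge_smul_of_nonneg ht.1.le, smul_eq_mul]
    calc t * gauge K y ≤ 1 * gauge K y :=
          mul_le_mul_of_nonneg_right ht.2 (gauge_nonneg _)
      _ = gauge K y := one_mul _
      _ < h := hy1
  have hE_open : IsOpen E := (hK_open.smul₀ hh.ne').inter hC_open
  have hE_meas : MeasurableSet E := hE_open.measurableSet
  have hE_bdd : Bornology.IsBounded E := (hK_bdd.smul₀ h).subset Set.inter_subset_left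
  obtain ⟨c0, hc0⟩ := hC_ne
  have hKC_ne : (K ∩ C).Nonempty := by
    have h1 : Filter.Tendsto (fun ε : ℝ => ε • c0) (nhdsWithin 0 (Set.Ioi 0)) (nhds 0) := by
      have h2 : Filter.Tendsto (fun ε : ℝ => ε • c0) (nhds 0) (nhds ((0:ℝ) • c0)) :=
        ((continuous_id.smul (continuous_const : Continuous fun _ : ℝ => c0)).tendsto (0:ℝ))
      rw [zero_smul] at h2
      exact h2.mono_left nhdsWithin_le_nhds
    have h2 : ∀ᶠ ε : ℝ in nhdsWithin 0 (Set.Ioi 0), ε • c0 ∈ K :=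
      h1.eventually_mem (hK_open.mem_nhds hK_zero)
    have h3 : ∀ᶠ ε : ℝ in nhdsWithin 0 (Set.Ioi 0), ε ∈ Set.Ioi (0:ℝ) := self_mem_nhdsWithin
    obtain ⟨ε, hεK, hε0⟩ := (h2.and h3).exists
    exact ⟨ε • c0, hεK, hC_cone c0 hc0 ε hε0⟩
  have hE_eq : E = h • (K ∩ C) := by
    rw [hE_def, smul_set_inter₀ hh.ne', hKC_smul h hh]
  have hE_ne : E.Nonempty := by
    obtain ⟨x, hx⟩ := hKC_ne
    exact hE_eq ▸ ⟨h • x, Set.smul_mem_smul_set hx⟩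
  have hμKC_pos : 0 < volume (K ∩ C) := (hK_open.inter hC_open).measure_pos volume hKC_ne
  have hμKC_fin : volume (K ∩ C) < ∞ := (hK_bdd.subset Set.inter_subset_left).measure_lt_top
  have hvolE : volume E = ENNReal.ofReal (h ^ d) * volume (K ∩ C) := by
    rw [hE_eq, Measure.addHaar_smul, finrank_euclideanSpace_fin,
      abs_of_nonneg (by positivity : (0:ℝ) ≤ h ^ d)]
  have hμE_pos : 0 < volume E := hE_open.measure_pos volume hE_ne
  have hμE_fin : volume E < ∞ := hE_bdd.measure_lt_top
  have hμEt_pos : 0 < (volume E).toReal := ENNReal.toReal_pos hμE_pos.ne' hμE_fin.ne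
  have hvolKC_t_pos : 0 < (volume (K ∩ C)).toReal :=
    ENNReal.toReal_pos hμKC_pos.ne' hμKC_fin.ne
  have hcvol : h ^ d * (volume (K ∩ C)).toReal = (volume E).toReal := by
    rw [hvolE, ENNReal.toReal_mul, ENNReal.toReal_ofReal (by positivity)]
  have hcpt : IsCompact (closure E) := hE_bdd.isCompact_closure
  have hf_int : IntegrableOn f E volume :=
    (hf_cont.integrableOn_compact hcpt).mono_set subset_closure
  set F : EuclideanSpace ℝ (Fin d) → ℝ := fun x => dualNorm K (gradient f x) with hF_def
  have hF_meas : Measurable F := aux_F_meas hK_conv hK_open hK_zero hK_bdd f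
  have hF_nonneg : ∀ x, 0 ≤ F x := fun x =>
    aux_dualNorm_nonneg hK_conv hK_open hK_zero hK_bdd _
  set N : EuclideanSpace ℝ (Fin d) → ℝ≥0∞ := fun x => ENNReal.ofReal (F x) with hN_def
  have hN_meas : Measurable N := ENNReal.measurable_ofReal.comp hF_meas
  have hgauge_cont : Continuous (gauge K) := continuous_gauge hK_conv (hK_open.mem_nhds hK_zero)
  set G : EuclideanSpace ℝ (Fin d) → ℝ≥0∞ :=
    fun x => ENNReal.ofReal (gauge K x) * N x with hG_def
  have hG_meas : Measurable G :=
    (ENNReal.measurable_ofReal.comp hgauge_cont.measurable).mul hN_meas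
  have h0cl : (0 : EuclideanSpace ℝ (Fin d)) ∈ closure E := by
    obtain ⟨e0, he0⟩ := hE_ne
    have h1 : Filter.Tendsto (fun ε : ℝ => ε • e0) (nhdsWithin 0 (Set.Ioi 0)) (nhds 0) := by
      have h2 : Filter.Tendsto (fun ε : ℝ => ε • e0) (nhds 0) (nhds ((0:ℝ) • e0)) :=
        ((continuous_id.smul (continuous_const : Continuous fun _ : ℝ => e0)).tendsto (0:ℝ))
      rw [zero_smul] at h2
      exact h2.mono_left nhdsWithin_le_nhds
    refine mem_closure_of_tendsto h1 ?_
    filter_upwards [Ioo_mem_nhdsGT_of_mem (Set.mem_Ico.2 ⟨le_refl (0:ℝ), zero_lt_one⟩)]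
      with ε hε
    exact hsmulE ε ⟨hε.1, hε.2.le⟩ e0 he0
  -- Step 1 : reduce to a lintegral over E
  have hsteklov : steklov K C h f 0 = (volume E).toReal⁻¹ * ∫ y in E, f y := by
    have h1 : steklov K C h f 0
        = (h ^ d * (volume (K ∩ C)).toReal)⁻¹ * ∫ y in (h • K) ∩ C, f (0 + y) := rfl
    rw [h1, hcvol]
    simp only [zero_add]
    rfl
  have hdiff_eq : f 0 - steklov K C h f 0 = (volume E).toReal⁻¹ * ∫ y in E, (f 0 - f y) := by
    rw [hsteklov, integral_sub (integrableOn_const (C := f 0) hμE_fin.ne : Integrable (fun _ => f 0) (volume.restrict E)) hf_int,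
      setIntegral_const, smul_eq_mul, measureReal_def]
    field_simp
  have step1 : ENNReal.ofReal |f 0 - steklov K C h f 0| ≤
      (volume E)⁻¹ * ∫⁻ y in E, ENNReal.ofReal |f 0 - f y| := by
    rw [hdiff_eq, abs_mul, abs_of_nonneg (inv_nonneg.2 hμEt_pos.le),
      ENNReal.ofReal_mul (inv_nonneg.2 hμEt_pos.le)]
    have hinv : ENNReal.ofReal (volume E).toReal⁻¹ = (volume E)⁻¹ := by
      rw [ENNReal.ofReal_inv_of_pos hμEt_pos, ENNReal.ofReal_toReal hμE_fin.ne]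
    rw [hinv]
    apply mul_le_mul_right
    calc ENNReal.ofReal |∫ y in E, (f 0 - f y)|
        = ‖∫ y in E, (f 0 - f y)‖ₑ := (enorm_eq_ofReal_abs _).symm
      _ ≤ ∫⁻ y in E, ‖f 0 - f y‖ₑ := enorm_integral_le_lintegral_enorm _
      _ = ∫⁻ y in E, ENNReal.ofReal |f 0 - f y| := by
          simp_rw [enorm_eq_ofReal_abs]
  set Ψ : EuclideanSpace ℝ (Fin d) → ℝ≥0∞ :=
    fun y => ∫⁻ t in Set.Ioo (0:ℝ) 1, ENNReal.ofReal (F (t • y) * gauge K y) with hΨ_def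
  have step2 : (∫⁻ y in E, ENNReal.ofReal |f 0 - f y|) ≤ ∫⁻ y in E, Ψ y := by
    apply lintegral_mono_ae
    rw [ae_restrict_iff' hE_meas]
    exact Filter.Eventually.of_forall fun y hy =>
      aux_ftc_bound hK_conv hK_open hK_zero hK_bdd hK_symm hsmulE h0cl hf_cont hf_diff hy
  -- the kernel after Fubini / scaling
  set Q : ℝ → EuclideanSpace ℝ (Fin d) → ℝ≥0∞ := fun t x =>
    if gauge K x < t * h then ENNReal.ofReal (t⁻¹ * (t ^ d)⁻¹) * G x else 0 with hQ_def
  have hQunc_meas : Measurable fun p : ℝ × EuclideanSpace ℝ (Fin d) => Q p.1 p.2 := by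
    simp only [hQ_def]
    apply Measurable.ite
    · exact measurableSet_lt (hgauge_cont.comp continuous_snd).measurable
        (continuous_fst.mul continuous_const).measurable
    · exact (ENNReal.measurable_ofReal.comp
        ((measurable_fst.inv).mul (measurable_fst.pow_const d).inv)).mul
        (hG_meas.comp measurable_snd)
    · exact measurable_const
  have inner_eq : ∀ t ∈ Set.Ioo (0:ℝ) 1,
      (∫⁻ y in E, ENNReal.ofReal (F (t • y) * gauge K y)) = ∫⁻ x in E, Q t x := by
    intro t ht
    have ht0 : 0 < t := ht.1
    have ha : ∀ y : EuclideanSpace ℝ (Fin d),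
        ENNReal.ofReal (F (t • y) * gauge K y) = ENNReal.ofReal t⁻¹ * G (t • y) := by
      intro y
      have hgy : gauge K (t • y) = t * gauge K y := by
        rw [gauge_smul_of_nonneg ht0.le, smul_eq_mul]
      show ENNReal.ofReal (F (t • y) * gauge K y)
          = ENNReal.ofReal t⁻¹ * (ENNReal.ofReal (gauge K (t • y)) * ENNReal.ofReal (F (t • y)))
      rw [hgy, ← ENNReal.ofReal_mul (mul_nonneg ht0.le (gauge_nonneg _)),
        ← ENNReal.ofReal_mul (inv_nonneg.2 ht0.le)]
      congr 1
      rw [mul_assoc t (gauge K y) (F (t • y)), inv_mul_cancel_left₀ ht0.ne', mul_comm]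
    have hs_meas : MeasurableSet {x : EuclideanSpace ℝ (Fin d) | gauge K x < t * h} :=
      measurableSet_lt hgauge_cont.measurable measurable_const
    have htE_meas : MeasurableSet (t • E) := (hE_open.smul₀ ht0.ne').measurableSet
    have hb : ∫⁻ y in E, ENNReal.ofReal t⁻¹ * G (t • y)
        = ENNReal.ofReal t⁻¹ * ∫⁻ y in E, G (t • y) :=
      lintegral_const_mul _ (hG_meas.comp (measurable_const_smul t))
    have hc : ∫⁻ y in E, G (t • y) = ENNReal.ofReal ((t ^ d)⁻¹) * ∫⁻ x in t • E, G x :=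
      aux_lintegral_comp_smul G ht0 htE_meas
    have hsub : t • E = {x : EuclideanSpace ℝ (Fin d) | gauge K x < t * h} ∩ E := by
      ext x
      constructor
      · rintro ⟨x0, hx0, rfl⟩
        rcases hE_mem.1 hx0 with ⟨h1, h2⟩
        have hg : gauge K (t • x0) = t * gauge K x0 := by
          rw [gauge_smul_of_nonneg ht0.le, smul_eq_mul]
        have hgn := gauge_nonneg (s := K) x0
        refine ⟨by rw [Set.mem_setOf_eq, hg]; exact (mul_lt_mul_iff_right₀ ht0).2 h1, ?_⟩
        refine hE_mem.2 ⟨?_, hC_cone x0 h2 t ht0⟩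
        rw [hg]
        nlinarith [ht.2, hh]
      · rintro ⟨hx1, hx2⟩
        rcases hE_mem.1 hx2 with ⟨h1, h2⟩
        refine ⟨t⁻¹ • x, ?_, smul_inv_smul₀ ht0.ne' x⟩
        refine hE_mem.2 ⟨?_, hC_cone x h2 t⁻¹ (by positivity)⟩
        rw [gauge_smul_of_nonneg (inv_nonneg.2 ht0.le), smul_eq_mul]
        rw [Set.mem_setOf_eq] at hx1
        calc t⁻¹ * gauge K x < t⁻¹ * (t * h) :=
              mul_lt_mul_of_pos_left hx1 (by positivity)
          _ = h := by field_simp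
    have hd' : ∫⁻ x in t • E, G x
        = ∫⁻ x in E, ({x : EuclideanSpace ℝ (Fin d) | gauge K x < t * h}).indicator G x := by
      rw [hsub, ← Measure.restrict_restrict hs_meas]
      exact (lintegral_indicator hs_meas G).symm
    have he : ∀ x : EuclideanSpace ℝ (Fin d),
        ENNReal.ofReal t⁻¹ * (ENNReal.ofReal ((t ^ d)⁻¹) *
          ({x : EuclideanSpace ℝ (Fin d) | gauge K x < t * h}).indicator G x) = Q t x := by
      intro x
      simp only [hQ_def]
      by_cases hx : gauge K x < t * h
      · rw [if_pos hx, Set.indicator_of_mem (by exact hx)]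
        rw [← mul_assoc, ← ENNReal.ofReal_mul (by positivity : (0:ℝ) ≤ t⁻¹)]
      · rw [if_neg hx, Set.indicator_of_notMem (by exact hx)]
        simp
    calc ∫⁻ y in E, ENNReal.ofReal (F (t • y) * gauge K y)
        = ∫⁻ y in E, ENNReal.ofReal t⁻¹ * G (t • y) := by simp_rw [ha]
      _ = ENNReal.ofReal t⁻¹ * (ENNReal.ofReal ((t ^ d)⁻¹) * ∫⁻ x in t • E, G x) := by
          rw [hb, hc]
      _ = ∫⁻ x in E, ENNReal.ofReal t⁻¹ * (ENNReal.ofReal ((t ^ d)⁻¹) *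
            ({x : EuclideanSpace ℝ (Fin d) | gauge K x < t * h}).indicator G x) := by
          rw [hd', ← lintegral_const_mul _ (hG_meas.indicator hs_meas),
            ← lintegral_const_mul _ ((hG_meas.indicator hs_meas).const_mul _)]
      _ = ∫⁻ x in E, Q t x := lintegral_congr he
  have hswap1 : ∫⁻ y in E, Ψ y
      = ∫⁻ t in Set.Ioo (0:ℝ) 1, ∫⁻ y in E, ENNReal.ofReal (F (t • y) * gauge K y) := by
    simp only [hΨ_def]
    exact lintegral_lintegral_swap ((ENNReal.measurable_ofReal.comp
      ((hF_meas.comp ((continuous_snd.smul continuous_fst).measurable)).mul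
        (hgauge_cont.measurable.comp measurable_fst))).aemeasurable)
  have hswap2 : ∫⁻ t in Set.Ioo (0:ℝ) 1, ∫⁻ x in E, Q t x
      = ∫⁻ x in E, ∫⁻ t in Set.Ioo (0:ℝ) 1, Q t x :=
    lintegral_lintegral_swap hQunc_meas.aemeasurable
  have hcongr_t : ∫⁻ t in Set.Ioo (0:ℝ) 1, ∫⁻ y in E, ENNReal.ofReal (F (t • y) * gauge K y)
      = ∫⁻ t in Set.Ioo (0:ℝ) 1, ∫⁻ x in E, Q t x :=
    setLIntegral_congr_fun measurableSet_Ioo inner_eq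
  have hinner_x : ∀ x ∈ E, x ≠ 0 →
      (∫⁻ t in Set.Ioo (0:ℝ) 1, Q t x)
        = volume E * (ENNReal.ofReal (gfun K C h (gauge K x)) * N x) := by
    intro x hx hx0
    rcases hE_mem.1 hx with ⟨hxh, hxC⟩
    have hu : 0 < gauge K x := (gauge_pos habs hvb).2 hx0
    set u := gauge K x with hu_def
    set a := u / h with ha_def
    have ha0 : 0 < a := div_pos hu hh
    have ha1 : a < 1 := (div_lt_one hh).2 hxh
    have hQx : ∀ t : ℝ, Q t x
        = (Set.Ioi a).indicator (fun t => ENNReal.ofReal (t⁻¹ * (t ^ d)⁻¹) * G x) t := by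
      intro t
      simp only [hQ_def]
      by_cases hcond : gauge K x < t * h
      · have hmemt : t ∈ Set.Ioi a := by
          rw [Set.mem_Ioi, ha_def]
          exact (div_lt_iff₀ hh).2 (by linarith [hcond])
        rw [if_pos hcond, Set.indicator_of_mem hmemt]
      · have hmemt : t ∉ Set.Ioi a := by
          rw [Set.mem_Ioi, ha_def]
          intro hcon
          exact hcond ((div_lt_iff₀ hh).1 hcon)
        rw [if_neg hcond, Set.indicator_of_notMem hmemt]
    have h1 : ∫⁻ t in Set.Ioo (0:ℝ) 1, Q t x
        = ∫⁻ t in Set.Ioo a 1, ENNReal.ofReal (t⁻¹ * (t ^ d)⁻¹) * G x := by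
      rw [show (∫⁻ t in Set.Ioo (0:ℝ) 1, Q t x) = ∫⁻ t in Set.Ioo (0:ℝ) 1,
        (Set.Ioi a).indicator (fun t => ENNReal.ofReal (t⁻¹ * (t ^ d)⁻¹) * G x) t from
        lintegral_congr fun t => hQx t]
      rw [lintegral_indicator measurableSet_Ioi, Measure.restrict_restrict measurableSet_Ioi]
      have hseteq : Set.Ioi a ∩ Set.Ioo (0:ℝ) 1 = Set.Ioo a 1 := by
        ext s
        constructor
        · rintro ⟨hs1, hs2, hs3⟩
          exact ⟨hs1, hs3⟩
        · rintro ⟨hs1, hs2⟩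
          exact ⟨hs1, lt_trans ha0 hs1, hs2⟩
      rw [hseteq]
    have h2 : ∫⁻ t in Set.Ioo a 1, ENNReal.ofReal (t⁻¹ * (t ^ d)⁻¹) * G x
        = (∫⁻ t in Set.Ioo a 1, ENNReal.ofReal (t⁻¹ * (t ^ d)⁻¹)) * G x :=
      lintegral_mul_const _ (ENNReal.measurable_ofReal.comp
        ((measurable_id.inv).mul (measurable_id.pow_const d).inv))
    have hc_cont : ContinuousOn (fun t : ℝ => t⁻¹ * (t ^ d)⁻¹) (Set.Icc a 1) := by
      apply ContinuousOn.mul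
      · exact continuousOn_id.inv₀ fun s hs => (lt_of_lt_of_le ha0 hs.1).ne'
      · exact (continuousOn_id.pow d).inv₀ fun s hs =>
          pow_ne_zero _ (lt_of_lt_of_le ha0 hs.1).ne'
    have hc_int : IntegrableOn (fun t : ℝ => t⁻¹ * (t ^ d)⁻¹) (Set.Ioo a 1) :=
      (hc_cont.integrableOn_compact isCompact_Icc).mono_set Set.Ioo_subset_Icc_self
    have hc_nonneg : ∀ᵐ s ∂(volume.restrict (Set.Ioo a 1)), 0 ≤ s⁻¹ * (s ^ d)⁻¹ := by
      rw [ae_restrict_iff' measurableSet_Ioo]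
      refine Filter.Eventually.of_forall fun s hs => ?_
      have hs0 : 0 < s := lt_trans ha0 hs.1
      positivity
    have h3 : (∫⁻ t in Set.Ioo a 1, ENNReal.ofReal (t⁻¹ * (t ^ d)⁻¹))
        = ENNReal.ofReal ((a ^ (-(d:ℝ)) - 1) / d) := by
      rw [← ofReal_integral_eq_lintegral_ofReal hc_int hc_nonneg]
      congr 1
      have hset : ∫ t in Set.Ioo a 1, t⁻¹ * (t ^ d)⁻¹
          = ∫ t in Set.Ioo a 1, t ^ (-(d:ℝ) - 1) := by
        apply setIntegral_congr_fun measurableSet_Ioo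
        intro s hs
        have hs0 : 0 < s := lt_trans ha0 hs.1
        show s⁻¹ * (s ^ d)⁻¹ = s ^ (-(d:ℝ) - 1)
        rw [show -(d:ℝ) - 1 = -((d:ℝ) + 1) by ring, Real.rpow_neg hs0.le,
          Real.rpow_add hs0, Real.rpow_natCast, Real.rpow_one, mul_inv, mul_comm]
      rw [hset, ← integral_Ioc_eq_integral_Ioo, ← intervalIntegral.integral_of_le ha1.le]
      have hrne : -(d:ℝ) - 1 ≠ -1 := by
        intro hcon
        have h' : (d:ℝ) = 0 := by linarith
        exact hd0.ne' h'
      have h0not : (0:ℝ) ∉ Set.uIcc a 1 := by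
        rw [Set.uIcc_of_le ha1.le]
        rintro ⟨hc1, -⟩
        exact absurd hc1 (not_le.2 ha0)
      rw [integral_rpow (Or.inr ⟨hrne, h0not⟩)]
      rw [show -(d:ℝ) - 1 + 1 = -(d:ℝ) by ring, Real.one_rpow]
      rw [div_neg, ← neg_div, neg_sub]
    have hu_pow_pos : (0:ℝ) < u ^ d := pow_pos hu d
    have ha_rw : a ^ (-(d:ℝ)) = h ^ d * (u ^ d)⁻¹ := by
      rw [ha_def, Real.rpow_neg (by positivity), Real.rpow_natCast, div_pow, inv_div,
        div_eq_mul_inv]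
    have hnonneg : (0:ℝ) ≤ (a ^ (-(d:ℝ)) - 1) / d := by
      have hle : u ^ d ≤ h ^ d := pow_le_pow_left₀ hu.le hxh.le d
      have h1a : (1:ℝ) ≤ h ^ d * (u ^ d)⁻¹ := by
        rw [← div_eq_mul_inv]
        exact (one_le_div hu_pow_pos).2 hle
      rw [ha_rw]
      apply div_nonneg (by linarith) hd0.le
    have hreal : (a ^ (-(d:ℝ)) - 1) / d * u
        = h ^ d * (volume (K ∩ C)).toReal * gfun K C h u := by
      have hu_rw : u ^ (1 - (d:ℝ)) = u * (u ^ d)⁻¹ := by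
        rw [show (1:ℝ) - d = 1 + (-(d:ℝ)) by ring, Real.rpow_add hu, Real.rpow_one,
          Real.rpow_neg hu.le, Real.rpow_natCast]
      simp only [gfun]
      rw [hu_rw, ha_rw]
      have h1 : (volume (K ∩ C)).toReal ≠ 0 := hvolKC_t_pos.ne'
      have h2 : (h:ℝ) ^ d ≠ 0 := by positivity
      field_simp
    have hvolE' : volume E = ENNReal.ofReal (h ^ d * (volume (K ∩ C)).toReal) := by
      rw [hvolE, ENNReal.ofReal_mul (by positivity), ENNReal.ofReal_toReal hμKC_fin.ne]
    have hGx : G x = ENNReal.ofReal u * N x := rfl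
    rw [h1, h2, h3]
    calc ENNReal.ofReal ((a ^ (-(d:ℝ)) - 1) / d) * G x
        = ENNReal.ofReal ((a ^ (-(d:ℝ)) - 1) / d * u) * N x := by
          rw [hGx, ← mul_assoc, ← ENNReal.ofReal_mul hnonneg]
      _ = ENNReal.ofReal (h ^ d * (volume (K ∩ C)).toReal * gfun K C h u) * N x := by
          rw [hreal]
      _ = volume E * (ENNReal.ofReal (gfun K C h u) * N x) := by
          rw [ENNReal.ofReal_mul (by positivity), hvolE', mul_assoc]
  haveI hnontriv : Nontrivial (EuclideanSpace ℝ (Fin d)) := by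
    refine ⟨⟨EuclideanSpace.single (⟨0, hd⟩ : Fin d) (1:ℝ), 0, fun hcon => ?_⟩⟩
    have h1 : (EuclideanSpace.single (⟨0, hd⟩ : Fin d) (1:ℝ)) ⟨0, hd⟩ = (0 : EuclideanSpace ℝ (Fin d)) ⟨0, hd⟩ := by rw [hcon]
    rw [EuclideanSpace.single_apply] at h1
    simp at h1
  have hae0 : ∀ᵐ x ∂(volume.restrict E), (∫⁻ t in Set.Ioo (0:ℝ) 1, Q t x)
      = volume E * (ENNReal.ofReal (gfun K C h (gauge K x)) * N x) := by
    have h1 : ∀ᵐ x ∂(volume.restrict E), x ∈ E :=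
      (ae_restrict_iff' hE_meas).2 (Filter.Eventually.of_forall fun x hx => hx)
    have h2 : ∀ᵐ x ∂(volume.restrict E), x ≠ (0 : EuclideanSpace ℝ (Fin d)) := by
      rw [ae_iff]
      simp only [ne_eq, not_not]
      have : {x : EuclideanSpace ℝ (Fin d) | x = 0} = {0} := by
        ext x; simp
      rw [this, Measure.restrict_apply (measurableSet_singleton 0)]
      exact measure_mono_null Set.inter_subset_left (measure_singleton 0)
    filter_upwards [h1, h2] with x hx hx0 using hinner_x x hx hx0
  have step3 : (volume E)⁻¹ * ∫⁻ y in E, Ψ y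
      = ∫⁻ x in E, ENNReal.ofReal (gfun K C h (gauge K x)) * N x := by
    rw [hswap1, hcongr_t, hswap2, lintegral_congr_ae hae0,
      lintegral_const_mul' _ _ hμE_fin.ne, ← mul_assoc,
      ENNReal.inv_mul_cancel hμE_pos.ne' hμE_fin.ne, one_mul]
  -- Hölder
  have hp1 : (1:ℝ≥0∞) < p := lt_of_le_of_lt (by exact_mod_cast hd) hp
  have hmono : ∫⁻ x in E, ENNReal.ofReal (gfun K C h (gauge K x)) * N x
      ≤ ∫⁻ x in E, (‖gfun K C h (gauge K x)‖₊ : ℝ≥0∞) * (‖F x‖₊ : ℝ≥0∞) := by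
    apply lintegral_mono
    intro x
    apply mul_le_mul'
    · rw [← enorm_eq_nnnorm, enorm_eq_ofReal_abs]
      exact ENNReal.ofReal_le_ofReal (le_abs_self _)
    · rw [hN_def, ← enorm_eq_nnnorm, enorm_eq_ofReal_abs]
      exact ENNReal.ofReal_le_ofReal (le_abs_self _)
  have hgg_meas : Measurable fun x : EuclideanSpace ℝ (Fin d) => gfun K C h (gauge K x) := by
    simp only [gfun]
    apply Measurable.const_mul
    apply Measurable.sub
    · exact hgauge_cont.measurable.pow measurable_const
    · exact (hgauge_cont.measurable).div_const _
  have step4 : ∫⁻ x in E, (‖gfun K C h (gauge K x)‖₊ : ℝ≥0∞) * (‖F x‖₊ : ℝ≥0∞)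
      ≤ eLpNorm (fun y => gfun K C h (gauge K y)) (conjExp p) (volume.restrict E) *
        eLpNorm F p (volume.restrict E) := by
    rcases eq_or_ne p ∞ with rfl | hptop
    · have hq : conjExp ∞ = 1 := by
        simp [conjExp]
      rw [hq, eLpNorm_one_eq_lintegral_enorm, eLpNorm_exponent_top]
      calc ∫⁻ x in E, (‖gfun K C h (gauge K x)‖₊ : ℝ≥0∞) * (‖F x‖₊ : ℝ≥0∞)
          ≤ ∫⁻ x in E, (‖gfun K C h (gauge K x)‖₊ : ℝ≥0∞) *
              eLpNormEssSup F (volume.restrict E) := by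
            apply lintegral_mono_ae
            filter_upwards [ENNReal.ae_le_essSup
              (fun x : EuclideanSpace ℝ (Fin d) => (‖F x‖₊ : ℝ≥0∞))] with x hx
            exact mul_le_mul_right hx _
        _ = (∫⁻ x in E, (‖gfun K C h (gauge K x)‖₊ : ℝ≥0∞)) *
              eLpNormEssSup F (volume.restrict E) :=
            lintegral_mul_const _ hgg_meas.enorm
    · have hp0 : p ≠ 0 := (lt_trans zero_lt_one hp1).ne'
      have hpt1 : 1 < p.toReal := by
        have := (ENNReal.toReal_lt_toReal ENNReal.one_ne_top hptop).2 hp1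
        rwa [ENNReal.toReal_one] at this
      have hprt_pos : (0:ℝ) < p.toReal := lt_trans zero_lt_one hpt1
      have hpinv_lt : p⁻¹ < 1 := by
        rw [ENNReal.inv_lt_one]
        exact hp1
      have hq_ne0 : (1:ℝ≥0∞) - p⁻¹ ≠ 0 := (tsub_pos_iff_lt.2 hpinv_lt).ne'
      have hq_ne_top' : (1:ℝ≥0∞) - p⁻¹ ≠ ∞ :=
        ne_top_of_le_ne_top ENNReal.one_ne_top tsub_le_self
      have hq0 : conjExp p ≠ 0 := by
        rw [conjExp]
        exact ENNReal.inv_ne_zero.2 hq_ne_top'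
      have hqtop : conjExp p ≠ ∞ := by
        rw [conjExp]
        exact ENNReal.inv_ne_top.2 hq_ne0
      have hq_toReal : (conjExp p).toReal = (1 - p.toReal⁻¹)⁻¹ := by
        rw [conjExp, ENNReal.toReal_inv]
        congr 1
        rw [ENNReal.toReal_sub_of_le hpinv_lt.le ENNReal.one_ne_top, ENNReal.toReal_one,
          ENNReal.toReal_inv]
      have hpinv_r : p.toReal⁻¹ < 1 := by
        rw [inv_lt_one_iff₀]
        right
        exact hpt1
      have hpinv_r_pos : 0 < p.toReal⁻¹ := inv_pos.2 hprt_pos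
      have hpq : Real.HolderConjugate (conjExp p).toReal p.toReal := by
        rw [hq_toReal, Real.holderConjugate_iff]
        constructor
        · rw [one_lt_inv_iff₀]
          constructor <;> linarith
        · rw [inv_inv]
          ring
      have hHolder := ENNReal.lintegral_mul_le_Lp_mul_Lq (volume.restrict E) hpq
        (hgg_meas.enorm.aemeasurable) (hF_meas.enorm.aemeasurable)
      rw [eLpNorm_eq_lintegral_rpow_enorm_toReal hq0 hqtop,
        eLpNorm_eq_lintegral_rpow_enorm_toReal hp0 hptop]
      exact hHolder
  calc ENNReal.ofReal |f 0 - steklov K C h f 0|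
      ≤ (volume E)⁻¹ * ∫⁻ y in E, ENNReal.ofReal |f 0 - f y| := step1
    _ ≤ (volume E)⁻¹ * ∫⁻ y in E, Ψ y := mul_le_mul_right step2 _
    _ = ∫⁻ x in E, ENNReal.ofReal (gfun K C h (gauge K x)) * N x := step3
    _ ≤ ∫⁻ x in E, (‖gfun K C h (gauge K x)‖₊ : ℝ≥0∞) * (‖F x‖₊ : ℝ≥0∞) := hmono
    _ ≤ _ := step4

end
end

section
/- Let p ∈ (d, ∞] and h > 0. Then ⌋f_{e,h}⌈_h = ⌋f_{e,h}⌈ = ‖f_{e,h}‖_{L_1(C)} = ∫_{hK∩C} f_{e,h}(y) dy; that is, the supremum defining ⌋f_{e,h}⌈_h is attained at x = θ, and the same value is the supremum over all window radii t > 0. -/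
open MeasureTheory Real Set
open scoped ENNReal Pointwise

noncomputable section
open scoped Classical

variable {d : ℕ}

/-- `⌋f_{e,h}⌈_h = ⌋f_{e,h}⌈ = ‖f_{e,h}‖_{L_1(C)} = ∫_{hK∩C} f_{e,h}(y) dy`. -/
theorem statement6 (d : ℕ) (hd : 1 ≤ d) (K C : Set (EuclideanSpace ℝ (Fin d)))
    (hC_open : IsOpen C) (hC_conv : Convex ℝ C)
    (hC_cone : ∀ x ∈ C, ∀ t : ℝ, 0 < t → t • x ∈ C) (hC_ne : C.Nonempty)
    (hK_open : IsOpen K) (hK_conv : Convex ℝ K) (hK_bdd : Bornology.IsBounded K)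
    (hK_symm : ∀ x ∈ K, -x ∈ K) (hK_zero : (0 : EuclideanSpace ℝ (Fin d)) ∈ K)
    (p : ℝ≥0∞) (hp : (d : ℝ≥0∞) < p) (h : ℝ) (hh : 0 < h) :
    semiNorm K C h (fe K C p h) = ∫ y in (h • K) ∩ C, fe K C p h y ∧
      semiNormAll K C (fe K C p h) = ∫ y in (h • K) ∩ C, fe K C p h y ∧
      eLpNorm (fe K C p h) 1 (volume.restrict C) =
        ENNReal.ofReal (∫ y in (h • K) ∩ C, fe K C p h y) := by
  classical
  -- abbreviations
  set q : ℝ := (conjExp p).toReal - 1 with hq_def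
  set c : ℝ := ((d : ℝ) * (volume (K ∩ C)).toReal)⁻¹ with hc_def
  set Gq : ℝ → ℝ := fun u => gfun K C h u ^ q with hGq_def
  set F : ℝ → ℝ := fun r => ∫ u in r..h, Gq u with hF_def
  have hd1 : (1:ℝ) ≤ d := by exact_mod_cast hd
  -- exponent facts
  have hq : 0 ≤ q ∧ -1 < (1 - (d:ℝ)) * q := by
    rw [hq_def]
    rcases eq_or_ne p ⊤ with rfl | hpt
    · have h1 : conjExp ⊤ = 1 := by simp [conjExp]
      rw [h1]; norm_num
    · have hp1 : (1:ℝ≥0∞) ≤ p :=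
        le_of_lt (lt_of_le_of_lt (by exact_mod_cast Nat.one_le_cast.mpr hd) hp)
      have hP : (d:ℝ) < p.toReal := by
        have := (ENNReal.toReal_lt_toReal (by simp) hpt).mpr hp
        simpa using this
      have hP1 : 1 < p.toReal := lt_of_le_of_lt hd1 hP
      have hP0 : 0 < p.toReal := by linarith
      have hcj : (conjExp p).toReal = (1 - (p.toReal)⁻¹)⁻¹ := by
        rw [conjExp, ENNReal.toReal_inv, ENNReal.toReal_sub_of_le, ENNReal.toReal_inv,
          ENNReal.toReal_one]
        · exact ENNReal.inv_le_one.mpr hp1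
        · simp
      have hqq : (conjExp p).toReal - 1 = (p.toReal - 1)⁻¹ := by
        rw [hcj]
        have h2 : (1:ℝ) - (p.toReal)⁻¹ ≠ 0 := by
          have : (p.toReal)⁻¹ < 1 := by
            rw [inv_lt_one_iff₀]; right; exact hP1
          linarith
        field_simp
        rw [div_sub_one (by linarith : p.toReal - 1 ≠ 0)]
        ring_nf
      rw [hqq]
      constructor
      · have : 0 < (p.toReal - 1)⁻¹ := inv_pos.mpr (by linarith)
        linarith
      · have h3 : (1 - (d:ℝ)) * (p.toReal - 1)⁻¹ = (1 - (d:ℝ)) / (p.toReal - 1) := by ring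
        rw [h3, lt_div_iff₀ (by linarith : (0:ℝ) < p.toReal - 1)]
        linarith
  -- membership in h • K
  have hmemK : ∀ t : ℝ, 0 < t → ∀ y : EuclideanSpace ℝ (Fin d), y ∈ t • K ↔ gauge K y < t := by
    intro t ht y
    rw [mem_smul_set_iff_inv_smul_mem₀ ht.ne']
    have h1 : t⁻¹ • y ∈ K ↔ gauge K (t⁻¹ • y) < 1 := by
      conv_lhs => rw [← gauge_lt_one_eq_self_of_isOpen hK_conv hK_zero hK_open]
      exact Iff.rfl
    rw [h1, gauge_smul_of_nonneg (inv_nonneg.2 ht.le), smul_eq_mul, inv_mul_lt_iff₀ ht, mul_one]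
  -- nonnegativity of gfun
  have hc_nonneg : 0 ≤ c := inv_nonneg.2 (mul_nonneg (Nat.cast_nonneg d) ENNReal.toReal_nonneg)
  have hG_nonneg : ∀ u ∈ Icc (0:ℝ) h, 0 ≤ gfun K C h u := by
    intro u hu
    rcases eq_or_lt_of_le hu.1 with hu0 | hu0
    · rw [gfun, ← hu0, ← hc_def]
      simp only [zero_div, sub_zero]
      exact mul_nonneg hc_nonneg (Real.rpow_nonneg le_rfl _)
    · rw [gfun, ← hc_def]
      refine mul_nonneg hc_nonneg (sub_nonneg.2 ?_)
      have hud : u ^ (1 - (d:ℝ)) = u / u ^ (d:ℝ) := by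
        rw [Real.rpow_sub hu0, Real.rpow_one]
      rw [hud, Real.rpow_natCast]
      exact div_le_div_of_nonneg_left hu0.le (pow_pos hu0 d) (pow_le_pow_left₀ hu0.le hu.2 d)
  have hG_le : ∀ u ∈ Ioc (0:ℝ) h, gfun K C h u ≤ c * u ^ (1 - (d:ℝ)) := by
    intro u hu
    rw [gfun, ← hc_def]
    refine mul_le_mul_of_nonneg_left ?_ hc_nonneg
    exact sub_le_self _ (div_nonneg hu.1.le (pow_nonneg hh.le d))
  have hGq_nonneg : ∀ u ∈ Icc (0:ℝ) h, 0 ≤ Gq u := fun u hu =>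
    Real.rpow_nonneg (hG_nonneg u hu) q
  -- integrability of Gq on [0, h]
  have hGq_int : IntervalIntegrable Gq volume 0 h := by
    have hD : IntervalIntegrable (fun u : ℝ => c ^ q * u ^ ((1 - (d:ℝ)) * q)) volume 0 h :=
      (intervalIntegral.intervalIntegrable_rpow' hq.2).const_mul _
    refine hD.mono_fun ?_ ?_
    · have hsub : uIoc (0:ℝ) h ⊆ {u : ℝ | u ≠ 0} := by
        rw [uIoc_of_le hh.le]; intro u hu; exact ne_of_gt hu.1
      have hcont : ContinuousOn Gq (uIoc (0:ℝ) h) := by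
        refine ContinuousOn.rpow_const ?_ (fun x _ => Or.inr hq.1)
        intro u hu
        have hu0 : u ≠ 0 := hsub hu
        apply ContinuousAt.continuousWithinAt
        have : ContinuousAt (fun u : ℝ =>
            ((d : ℝ) * (volume (K ∩ C)).toReal)⁻¹ * (u ^ (1 - (d : ℝ)) - u / h ^ d)) u :=
          continuousAt_const.mul ((Real.continuousAt_rpow_const u _ (Or.inl hu0)).sub
            (continuousAt_id.div_const _))
        exact this
      exact hcont.aestronglyMeasurable measurableSet_uIoc
    · rw [uIoc_of_le hh.le]
      refine (ae_restrict_iff' measurableSet_Ioc).2 (Filter.Eventually.of_forall fun u hu => ?_)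
      have h0G : 0 ≤ gfun K C h u := hG_nonneg u ⟨hu.1.le, hu.2⟩
      have hb : gfun K C h u ^ q ≤ c ^ q * u ^ ((1 - (d:ℝ)) * q) := by
        calc gfun K C h u ^ q ≤ (c * u ^ (1 - (d:ℝ))) ^ q :=
              Real.rpow_le_rpow h0G (hG_le u hu) hq.1
          _ = c ^ q * u ^ ((1 - (d:ℝ)) * q) := by
              rw [Real.mul_rpow hc_nonneg (Real.rpow_nonneg hu.1.le _),
                ← Real.rpow_mul hu.1.le]
      have hrhs : 0 ≤ c ^ q * u ^ ((1 - (d:ℝ)) * q) :=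
        mul_nonneg (Real.rpow_nonneg hc_nonneg _) (Real.rpow_nonneg hu.1.le _)
      show ‖gfun K C h u ^ q‖ ≤ ‖c ^ q * u ^ ((1 - (d:ℝ)) * q)‖
      rw [Real.norm_eq_abs, Real.norm_eq_abs, abs_of_nonneg (Real.rpow_nonneg h0G q),
        abs_of_nonneg hrhs]
      exact hb
  -- integrability on subintervals
  have hGq_int' : ∀ r ∈ Icc (0:ℝ) h, ∀ r' ∈ Icc (0:ℝ) h, IntervalIntegrable Gq volume r r' := by
    intro r hr r' hr'
    refine hGq_int.mono_set ?_
    rw [uIcc_of_le hh.le]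
    exact uIcc_subset_Icc hr hr'
  -- properties of F
  have hF_split : ∀ r ∈ Icc (0:ℝ) h, (∫ u in (0:ℝ)..r, Gq u) + F r = F 0 := by
    intro r hr
    exact intervalIntegral.integral_add_adjacent_intervals
      (hGq_int' 0 (left_mem_Icc.2 hh.le) r hr) (hGq_int' r hr h (right_mem_Icc.2 hh.le))
  have hF_cont : ContinuousOn F (Icc 0 h) := by
    have h_int : IntegrableOn Gq (uIcc 0 h) := by
      rw [uIcc_of_le hh.le]
      exact (intervalIntegrable_iff_integrableOn_Icc_of_le hh.le).1 hGq_int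
    have := intervalIntegral.continuousOn_primitive_interval_left h_int
    rwa [uIcc_of_le hh.le] at this
  have hF_nonneg : ∀ r ∈ Icc (0:ℝ) h, 0 ≤ F r := by
    intro r hr
    exact intervalIntegral.integral_nonneg hr.2
      (fun u hu => hGq_nonneg u ⟨le_trans hr.1 hu.1, hu.2⟩)
  have hF_le : ∀ r ∈ Icc (0:ℝ) h, F r ≤ F 0 := by
    intro r hr
    have h1 := hF_split r hr
    have h2 : 0 ≤ ∫ u in (0:ℝ)..r, Gq u :=
      intervalIntegral.integral_nonneg hr.1 (fun u hu => hGq_nonneg u ⟨hu.1, le_trans hu.2 hr.2⟩)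
    linarith
  -- fe as a composition
  have fe_eq : ∀ y, fe K C p h y = F (min (gauge K y) h) := by
    intro y
    rw [fe]
    by_cases hy : y ∈ h • K
    · rw [if_pos hy, min_eq_left ((hmemK h hh y).1 hy).le]
    · rw [if_neg hy, min_eq_right (not_lt.1 (fun hlt => hy ((hmemK h hh y).2 hlt)))]
      rw [hF_def]
      simp [intervalIntegral.integral_same]
  have hgauge_cont : Continuous (gauge K) := continuous_gauge hK_conv (hK_open.mem_nhds hK_zero)
  have hmin_mem : ∀ y : EuclideanSpace ℝ (Fin d), min (gauge K y) h ∈ Icc (0:ℝ) h :=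
    fun y => ⟨le_min (gauge_nonneg _) hh.le, min_le_right _ _⟩
  have hfe_cont : Continuous (fe K C p h) := by
    have heq : fe K C p h = fun y => F (min (gauge K y) h) := funext fe_eq
    rw [heq]
    exact hF_cont.comp_continuous (hgauge_cont.min continuous_const) hmin_mem
  have hfe_nonneg : ∀ y, 0 ≤ fe K C p h y := by
    intro y; rw [fe_eq y]; exact hF_nonneg _ (hmin_mem y)
  have hfe_le : ∀ y, fe K C p h y ≤ F 0 := by
    intro y; rw [fe_eq y]; exact hF_le _ (hmin_mem y)
  -- compact support and integrability
  have hsupp : HasCompactSupport (fe K C p h) := by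
    apply HasCompactSupport.intro ((hK_bdd.smul₀ h).isCompact_closure)
    intro y hy
    rw [fe, if_neg (fun hmem => hy (subset_closure hmem))]
  have hfe_int : Integrable (fe K C p h) := hfe_cont.integrable_of_hasCompactSupport hsupp
  -- measurability helpers
  have hsK_meas : ∀ t : ℝ, 0 < t → MeasurableSet ((t • K) ∩ C) :=
    fun t ht => ((hK_open.smul₀ ht.ne').inter hC_open).measurableSet
  have himg_meas : ∀ (x : EuclideanSpace ℝ (Fin d)) (s : Set (EuclideanSpace ℝ (Fin d))),
      MeasurableSet s → MeasurableSet ((fun u => x + u) '' s) := by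
    intro x s hs
    have himg : (fun u => x + u) '' s = (fun v => -x + v) ⁻¹' s := by
      ext v
      simp only [mem_image, mem_preimage]
      constructor
      · rintro ⟨u, hu, rfl⟩; simpa using hu
      · intro hv; exact ⟨-x + v, hv, by abel⟩
    rw [himg]
    exact hs.preimage (measurable_const_add _)
  -- C is closed under addition
  have hC_add : ∀ x ∈ C, ∀ y ∈ C, x + y ∈ C := by
    intro x hx y hy
    have hm : (1/2 : ℝ) • x + (1/2 : ℝ) • y ∈ C :=
      hC_conv hx hy (by norm_num) (by norm_num) (by norm_num)
    have h2 := hC_cone _ hm 2 (by norm_num)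
    rw [smul_add, smul_smul, smul_smul] at h2
    norm_num at h2
    exact h2
  -- translation of set integrals
  have htrans : ∀ (x : EuclideanSpace ℝ (Fin d)) (s : Set (EuclideanSpace ℝ (Fin d))),
      MeasurableSet s →
      ∫ u in s, fe K C p h (x + u) = ∫ v in (fun u => x + u) '' s, fe K C p h v := by
    intro x s hs
    have himg := himg_meas x s hs
    rw [← integral_indicator hs, ← integral_indicator himg]
    have key : ∀ u, s.indicator (fun u => fe K C p h (x + u)) u
        = ((fun u => x + u) '' s).indicator (fe K C p h) (x + u) := by
      intro u
      by_cases hu : u ∈ s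
      · rw [indicator_of_mem hu, indicator_of_mem (mem_image_of_mem _ hu)]
      · rw [indicator_of_notMem hu, indicator_of_notMem]
        rintro ⟨u', hu', he⟩
        exact hu (by rwa [add_right_injective x he] at hu')
    calc ∫ u, s.indicator (fun u => fe K C p h (x + u)) u
        = ∫ u, ((fun u => x + u) '' s).indicator (fe K C p h) (x + u) := by
          simp_rw [key]
      _ = ∫ v, ((fun u => x + u) '' s).indicator (fe K C p h) v :=
          integral_add_left_eq_self _ x
  -- the integral I
  have hI_nonneg : 0 ≤ ∫ y in (h • K) ∩ C, fe K C p h y :=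
    setIntegral_nonneg (hsK_meas h hh) (fun y _ => hfe_nonneg y)
  have hCI : ∫ y in C, fe K C p h y = ∫ y in (h • K) ∩ C, fe K C p h y := by
    have hind : ∀ y, fe K C p h y = (h • K).indicator (fe K C p h) y := by
      intro y
      by_cases hy : y ∈ h • K
      · rw [indicator_of_mem hy]
      · rw [indicator_of_notMem hy, fe, if_neg hy]
    calc ∫ y in C, fe K C p h y = ∫ y in C, (h • K).indicator (fe K C p h) y := by
          simp_rw [← hind]
      _ = ∫ y in C ∩ (h • K), fe K C p h y :=
          setIntegral_indicator (hK_open.smul₀ hh.ne').measurableSet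
      _ = ∫ y in (h • K) ∩ C, fe K C p h y := by rw [inter_comm]
  -- upper bound
  have hub : ∀ t : ℝ, 0 < t → ∀ x ∈ C,
      |∫ u in (t • K) ∩ C, fe K C p h (x + u)| ≤ ∫ y in (h • K) ∩ C, fe K C p h y := by
    intro t ht x hx
    have hs := hsK_meas t ht
    rw [htrans x _ hs]
    have himgC : (fun u => x + u) '' ((t • K) ∩ C) ⊆ C := by
      rintro v ⟨u, hu, rfl⟩; exact hC_add x hx u hu.2
    have hnn : 0 ≤ ∫ v in (fun u => x + u) '' ((t • K) ∩ C), fe K C p h v :=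
      setIntegral_nonneg (himg_meas x _ hs) (fun y _ => hfe_nonneg y)
    rw [abs_of_nonneg hnn]
    calc ∫ v in (fun u => x + u) '' ((t • K) ∩ C), fe K C p h v
        ≤ ∫ v in C, fe K C p h v :=
          setIntegral_mono_set hfe_int.integrableOn
            (Filter.Eventually.of_forall hfe_nonneg) (HasSubset.Subset.eventuallyLE himgC)
      _ = ∫ y in (h • K) ∩ C, fe K C p h y := hCI
  -- approximating sequence
  obtain ⟨v₀, hv₀⟩ := hC_ne
  have hxC : ∀ n : ℕ, ((n:ℝ)+1)⁻¹ • v₀ ∈ C := fun n => hC_cone v₀ hv₀ _ (by positivity)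
  have hx0 : Filter.Tendsto (fun n : ℕ => ((n:ℝ)+1)⁻¹ • v₀) Filter.atTop (nhds 0) := by
    have h1 : Filter.Tendsto (fun n : ℕ => ((n:ℝ)+1)⁻¹) Filter.atTop (nhds 0) := by
      simpa only [one_div] using tendsto_one_div_add_atTop_nhds_zero_nat (𝕜 := ℝ)
    simpa using h1.smul_const v₀
  have hs_fin : volume ((h • K) ∩ C) < ⊤ :=
    ((hK_bdd.smul₀ h).subset inter_subset_left).measure_lt_top
  have htend : Filter.Tendsto
      (fun n : ℕ => ∫ u in (h • K) ∩ C, fe K C p h (((n:ℝ)+1)⁻¹ • v₀ + u)) Filter.atTop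
      (nhds (∫ y in (h • K) ∩ C, fe K C p h y)) := by
    refine MeasureTheory.tendsto_integral_of_dominated_convergence (fun _ => F 0)
      (fun n => ((hfe_cont.comp (continuous_const.add continuous_id)).aestronglyMeasurable))
      (integrableOn_const hs_fin.ne) (fun n => ?_) ?_
    · refine Filter.Eventually.of_forall (fun u => ?_)
      rw [Real.norm_eq_abs, abs_of_nonneg (hfe_nonneg _)]
      exact hfe_le _
    · refine Filter.Eventually.of_forall (fun u => ?_)
      have hadd : Filter.Tendsto (fun n : ℕ => ((n:ℝ)+1)⁻¹ • v₀ + u) Filter.atTop (nhds u) := by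
        simpa using hx0.add_const u
      exact (hfe_cont.tendsto u).comp hadd
  -- semiNorm h
  have hmem_sn : ∀ n : ℕ, |∫ u in (h • K) ∩ C, fe K C p h (((n:ℝ)+1)⁻¹ • v₀ + u)|
      ∈ semiSet K C h (fe K C p h) := fun n => ⟨_, hxC n, rfl⟩
  have hub_set : ∀ e ∈ semiSet K C h (fe K C p h), e ≤ ∫ y in (h • K) ∩ C, fe K C p h y := by
    rintro e ⟨x, hx, rfl⟩; exact hub h hh x hx
  have hbdd : BddAbove (semiSet K C h (fe K C p h)) := ⟨_, hub_set⟩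
  have h_sn : semiNorm K C h (fe K C p h) = ∫ y in (h • K) ∩ C, fe K C p h y := by
    refine le_antisymm (Real.sSup_le hub_set hI_nonneg) ?_
    refine le_of_tendsto htend (Filter.Eventually.of_forall (fun n => ?_))
    exact (le_abs_self _).trans (le_csSup hbdd (hmem_sn n))
  -- semiNormAll
  have h_sa : semiNormAll K C (fe K C p h) = ∫ y in (h • K) ∩ C, fe K C p h y := by
    have hub_all : ∀ e ∈ ⋃ t ∈ Set.Ioi (0:ℝ), semiSet K C t (fe K C p h),
        e ≤ ∫ y in (h • K) ∩ C, fe K C p h y := by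
      intro e he
      simp only [mem_iUnion, exists_prop] at he
      obtain ⟨t, ht, x, hx, rfl⟩ := he
      exact hub t ht x hx
    have hbdd' : BddAbove (⋃ t ∈ Set.Ioi (0:ℝ), semiSet K C t (fe K C p h)) := ⟨_, hub_all⟩
    refine le_antisymm (Real.sSup_le hub_all hI_nonneg) ?_
    refine le_of_tendsto htend (Filter.Eventually.of_forall (fun n => ?_))
    refine (le_abs_self _).trans (le_csSup hbdd' ?_)
    exact mem_biUnion (mem_Ioi.2 hh) (hmem_sn n)
  -- L1 norm
  have h_lp : eLpNorm (fe K C p h) 1 (volume.restrict C) =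
      ENNReal.ofReal (∫ y in (h • K) ∩ C, fe K C p h y) := by
    rw [eLpNorm_one_eq_lintegral_enorm]
    have h1 : ∫⁻ x, ‖fe K C p h x‖ₑ ∂(volume.restrict C)
        = ∫⁻ x, ENNReal.ofReal (fe K C p h x) ∂(volume.restrict C) :=
      lintegral_congr (fun x => Real.enorm_eq_ofReal (hfe_nonneg x))
    rw [h1, ← ofReal_integral_eq_lintegral_ofReal hfe_int.integrableOn
      (Filter.Eventually.of_forall hfe_nonneg), hCI]
  exact ⟨h_sn, h_sa, h_lp⟩

end
end

section
/- Let X, Y, Z be real vector spaces equipped with seminorms ‖·‖_X, ‖·‖_Y, ‖·‖_Z, let A : D_A → Y and B : D_B → Z be homogeneous operators (A(λx) = λ·A(x), B(λx) = λ·B(x) for all λ ∈ ℝ) with D_B ⊆ D_A ⊆ X, and let S : X → Y be a bounded linear operator with ‖S‖_{X→Y} = sup{‖Sx‖_Y : ‖x‖_X ≤ 1}. Set 𝔐 = {x ∈ D_B : ‖Bx‖_Z ≤ 1} and U(A,S;𝔐) = sup{‖Ax − Sx‖_Y : x ∈ 𝔐}. Then for every x ∈ D_B, ‖Ax‖_Y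 ≤ U(A,S;𝔐)·‖Bx‖_Z + ‖S‖_{X→Y}·‖x‖_X. -/
private lemma statement19_aux (a M : ℝ) (ha : 0 ≤ a) (hM : 0 ≤ M)
    (h : ∀ c : ℝ, 0 ≤ c → c * a ≤ M) : a = 0 := by
  by_contra h0
  have ha' : 0 < a := lt_of_le_of_ne ha (Ne.symm h0)
  have h2 := h ((M + 1) / a) (by positivity)
  rw [div_mul_cancel₀ _ ha'.ne'] at h2
  linarith

/-- Abstract Landau–Kolmogorov–Nagy type inequality: if `X, Y, Z` are real
vector spaces with seminorms, `A : D_A → Y`, `B : D_B → Z` are homogeneous operators with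
`D_B ⊆ D_A ⊆ X` (domains closed under scalar multiplication), `S : X → Y` is a bounded linear
operator, `𝔐 = {x ∈ D_B : ‖Bx‖_Z ≤ 1}` and `U(A,S;𝔐) = sup {‖Ax - Sx‖_Y : x ∈ 𝔐}`, then for
every `x ∈ D_B`, `‖Ax‖_Y ≤ U(A,S;𝔐) ‖Bx‖_Z + ‖S‖_{X→Y} ‖x‖_X`. -/
theorem statement19 {X Y Z : Type*}
    [AddCommGroup X] [Module ℝ X] [AddCommGroup Y] [Module ℝ Y]
    [AddCommGroup Z] [Module ℝ Z]
    (nX : Seminorm ℝ X) (nY : Seminorm ℝ Y) (nZ : Seminorm ℝ Z)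
    (DA DB : Set X) (hDBA : DB ⊆ DA)
    (hDA_smul : ∀ (c : ℝ), ∀ x ∈ DA, c • x ∈ DA)
    (hDB_smul : ∀ (c : ℝ), ∀ x ∈ DB, c • x ∈ DB)
    (A : X → Y) (B : X → Z)
    (hA_hom : ∀ (c : ℝ), ∀ x ∈ DA, A (c • x) = c • A x)
    (hB_hom : ∀ (c : ℝ), ∀ x ∈ DB, B (c • x) = c • B x)
    (S : X →ₗ[ℝ] Y)
    (hS_bdd : BddAbove ((fun x => nY (S x)) '' {x | nX x ≤ 1}))
    (hU_bdd : BddAbove ((fun x => nY (A x - S x)) '' {x ∈ DB | nZ (B x) ≤ 1})) :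
    ∀ x ∈ DB,
      nY (A x) ≤
        sSup ((fun x => nY (A x - S x)) '' {x ∈ DB | nZ (B x) ≤ 1}) * nZ (B x) +
          sSup ((fun x => nY (S x)) '' {x | nX x ≤ 1}) * nX x := by
  intro x hx
  set U := sSup ((fun x => nY (A x - S x)) '' {x ∈ DB | nZ (B x) ≤ 1}) with hU
  set M := sSup ((fun x => nY (S x)) '' {x | nX x ≤ 1}) with hM
  -- 0 ∈ DB and basic facts
  have h0B : (0 : X) ∈ DB := by simpa using hDB_smul 0 x hx
  have hB0 : B 0 = (0 : Z) := by simpa using hB_hom 0 x hx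
  -- M ≥ 0
  have hM0 : 0 ≤ M := by
    have h1 : nY (S 0) ≤ M :=
      le_csSup hS_bdd ⟨0, by simp, rfl⟩
    simpa using h1
  -- U ≥ 0
  have hU0 : 0 ≤ U := by
    have h1 : nY (A 0 - S 0) ≤ U :=
      le_csSup hU_bdd ⟨0, ⟨h0B, by simp [hB0]⟩, rfl⟩
    exact le_trans (apply_nonneg _ _) h1
  -- Claim 1 : nY (S x) ≤ M * nX x
  have hSle : nY (S x) ≤ M * nX x := by
    rcases eq_or_lt_of_le (apply_nonneg nX x) with h0 | hpos
    · have : nY (S x) = 0 := by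
        apply statement19_aux _ _ (apply_nonneg _ _) hM0
        intro c hc
        have hmem : nX (c • x) ≤ 1 := by
          rw [map_smul_eq_mul, ← h0, mul_zero]; norm_num
        have h1 : nY (S (c • x)) ≤ M := le_csSup hS_bdd ⟨c • x, hmem, rfl⟩
        rw [map_smul, map_smul_eq_mul, Real.norm_of_nonneg hc] at h1
        exact h1
      rw [this, ← h0, mul_zero]
    · set t := nX x with ht
      have hmem : nX (t⁻¹ • x) ≤ 1 := by
        rw [map_smul_eq_mul, Real.norm_of_nonneg (by positivity), ← ht,
          inv_mul_cancel₀ hpos.ne']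
      have h1 : nY (S (t⁻¹ • x)) ≤ M := le_csSup hS_bdd ⟨t⁻¹ • x, hmem, rfl⟩
      rw [map_smul, map_smul_eq_mul, Real.norm_of_nonneg (by positivity)] at h1
      calc nY (S x) = t * (t⁻¹ * nY (S x)) := by field_simp
        _ ≤ t * M := by nlinarith
        _ = M * t := mul_comm _ _
  -- Claim 2 : nY (A x - S x) ≤ U * nZ (B x)
  have hAle : nY (A x - S x) ≤ U * nZ (B x) := by
    rcases eq_or_lt_of_le (apply_nonneg nZ (B x)) with h0 | hpos
    · have : nY (A x - S x) = 0 := by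
        apply statement19_aux _ _ (apply_nonneg _ _) hU0
        intro c hc
        have hmemB : c • x ∈ DB := hDB_smul c x hx
        have hnorm : nZ (B (c • x)) ≤ 1 := by
          rw [hB_hom c x hx, map_smul_eq_mul, ← h0, mul_zero]; norm_num
        have h1 : nY (A (c • x) - S (c • x)) ≤ U :=
          le_csSup hU_bdd ⟨c • x, ⟨hmemB, hnorm⟩, rfl⟩
        rw [hA_hom c x (hDBA hx), map_smul, ← smul_sub, map_smul_eq_mul,
          Real.norm_of_nonneg hc] at h1
        exact h1
      rw [this, ← h0, mul_zero]
    · set t := nZ (B x) with ht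
      have hmemB : t⁻¹ • x ∈ DB := hDB_smul t⁻¹ x hx
      have hnorm : nZ (B (t⁻¹ • x)) ≤ 1 := by
        rw [hB_hom t⁻¹ x hx, map_smul_eq_mul, Real.norm_of_nonneg (by positivity), ← ht,
          inv_mul_cancel₀ hpos.ne']
      have h1 : nY (A (t⁻¹ • x) - S (t⁻¹ • x)) ≤ U :=
        le_csSup hU_bdd ⟨t⁻¹ • x, ⟨hmemB, hnorm⟩, rfl⟩
      rw [hA_hom t⁻¹ x (hDBA hx), map_smul, ← smul_sub, map_smul_eq_mul,
        Real.norm_of_nonneg (by positivity)] at h1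
      calc nY (A x - S x) = t * (t⁻¹ * nY (A x - S x)) := by field_simp
        _ ≤ t * U := by nlinarith
        _ = U * t := mul_comm _ _
  calc nY (A x) = nY ((A x - S x) + S x) := by rw [sub_add_cancel]
    _ ≤ nY (A x - S x) + nY (S x) := map_add_le_add _ _ _
    _ ≤ U * nZ (B x) + M * nX x := add_le_add hAle hSle
end
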